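/- The function F(P_max) = e^{-Γ/(φP_max)} + (Γ/(φP_max))·Ei(-Γ/(φP_max)), for fixed Γ, φ > 0, is monotonically increasing in P_max > 0, and F(P_max) → 0 as P_max → 0⁺. -/

import Mathlib

set_option maxHeartbeats 1000000


open Real Filter MeasureTheory Set

/-- The exponential integral `Ei(x) = -∫_{-x}^∞ e^{-t}/t dt`. -/
noncomputable def Ei (x : ℝ) : ℝ := -∫ t in Set.Ioi (-x), Real.exp (-t) / t

noncomputable def gAux (u : ℝ) : ℝ := ∫ t in Set.Ioi u, Real.exp (-t) / t

lemma integrableOn_gAux {c : ℝ} (hc : 0 < c) :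
    IntegrableOn (fun t => Real.exp (-t) / t) (Set.Ioi c) := by
  have h0 : IntegrableOn (fun t => Real.exp (-t)) (Set.Ioi c) := by
    simpa using exp_neg_integrableOn_Ioi c one_pos
  have hint : IntegrableOn (fun t => Real.exp (-t) / c) (Set.Ioi c) := h0.div_const c
  refine hint.mono' ?_ ?_
  · exact (((Real.measurable_exp.comp measurable_neg).div
      measurable_id).aestronglyMeasurable).restrict
  · filter_upwards [ae_restrict_mem measurableSet_Ioi] with t ht
    have htc : c < t := ht
    have ht0 : 0 < t := hc.trans htc
    rw [Real.norm_eq_abs, abs_div, abs_of_pos (exp_pos _), abs_of_pos ht0]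
    exact div_le_div_of_nonneg_left (exp_pos _).le hc htc.le

lemma gAux_pos {c : ℝ} (hc : 0 < c) : 0 < gAux c := by
  rw [gAux, setIntegral_pos_iff_support_of_nonneg_ae]
  · have : Function.support (fun t => Real.exp (-t) / t) ∩ Set.Ioi c = Set.Ioi c := by
      apply Set.inter_eq_self_of_subset_right
      intro t ht
      have ht0 : 0 < t := hc.trans ht
      exact div_ne_zero (exp_pos _).ne' ht0.ne'
    rw [this]
    exact MeasureTheory.Measure.measure_Ioi_pos volume c
  · filter_upwards [ae_restrict_mem measurableSet_Ioi] with t ht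
    exact div_nonneg (exp_pos _).le (hc.trans ht).le
  · exact integrableOn_gAux hc

lemma split_integral {a b : ℝ} (_ha : 0 < a) (hab : a ≤ b)
    (f : ℝ → ℝ) (hf : IntegrableOn f (Set.Ioi a)) :
    ∫ t in Set.Ioi a, f t = (∫ t in Set.Ioc a b, f t) + ∫ t in Set.Ioi b, f t := by
  rw [← setIntegral_union (Set.Ioc_disjoint_Ioi le_rfl) measurableSet_Ioi
        (hf.mono_set Set.Ioc_subset_Ioi_self)
        (hf.mono_set (Set.Ioi_subset_Ioi hab)),
      Set.Ioc_union_Ioi_eq_Ioi hab]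

lemma gAux_split {a b : ℝ} (ha : 0 < a) (hab : a ≤ b) :
    gAux a = (∫ t in Set.Ioc a b, Real.exp (-t) / t) + gAux b :=
  split_integral ha hab _ (integrableOn_gAux ha)

noncomputable def GAux (u : ℝ) : ℝ := Real.exp (-u) - u * gAux u

lemma GAux_strictAnti {a b : ℝ} (ha : 0 < a) (hab : a < b) : GAux b < GAux a := by
  have hsplit := gAux_split ha hab.le
  have hexp : Real.exp (-a) - Real.exp (-b) = ∫ t in Set.Ioc a b, Real.exp (-t) := by
    have := split_integral ha hab.le (fun t => Real.exp (-t))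
      (by simpa using exp_neg_integrableOn_Ioi a one_pos)
    rw [integral_exp_neg_Ioi, integral_exp_neg_Ioi] at this
    linarith
  have key : GAux a - GAux b =
      (∫ t in Set.Ioc a b, (Real.exp (-t) - a * (Real.exp (-t) / t))) +
      (b - a) * gAux b := by
    have h0 : IntegrableOn (fun t => Real.exp (-t)) (Set.Ioi a) := by
      simpa using exp_neg_integrableOn_Ioi a one_pos
    have hint1 : IntegrableOn (fun t => Real.exp (-t)) (Set.Ioc a b) :=
      h0.mono_set Set.Ioc_subset_Ioi_self
    have hint2 : IntegrableOn (fun t => a * (Real.exp (-t) / t)) (Set.Ioc a b) :=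
      ((integrableOn_gAux ha).mono_set Set.Ioc_subset_Ioi_self).const_mul a
    have hsub := MeasureTheory.integral_sub hint1 hint2
    rw [MeasureTheory.integral_const_mul] at hsub
    have hmul : a * gAux a =
        a * (∫ t in Set.Ioc a b, Real.exp (-t) / t) + a * gAux b := by
      rw [hsplit]; ring
    simp only [GAux]
    rw [hsub, ← hexp]
    linarith
  have h1 : 0 ≤ ∫ t in Set.Ioc a b, (Real.exp (-t) - a * (Real.exp (-t) / t)) := by
    apply setIntegral_nonneg measurableSet_Ioc
    intro t ht
    have ht0 : 0 < t := ha.trans ht.1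
    have : a * (Real.exp (-t) / t) ≤ Real.exp (-t) := by
      rw [mul_div_assoc']
      rw [div_le_iff₀ ht0]
      nlinarith [exp_pos (-t), ht.1]
    linarith
  have h2 : 0 < (b - a) * gAux b := by
    exact mul_pos (by linarith) (gAux_pos (ha.trans hab))
  linarith

lemma gAux_le {u : ℝ} (hu : 0 < u) : gAux u ≤ Real.exp (-u) / u := by
  have : gAux u ≤ ∫ t in Set.Ioi u, Real.exp (-t) / u := by
    apply setIntegral_mono_on (integrableOn_gAux hu)
    · have h0 : IntegrableOn (fun t => Real.exp (-t)) (Set.Ioi u) := by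
        simpa using exp_neg_integrableOn_Ioi u one_pos
      exact h0.div_const u
    · exact measurableSet_Ioi
    · intro t ht
      exact div_le_div_of_nonneg_left (exp_pos _).le hu (le_of_lt ht)
  calc gAux u ≤ ∫ t in Set.Ioi u, Real.exp (-t) / u := this
    _ = Real.exp (-u) / u := by
        rw [show (fun t => Real.exp (-t) / u) = fun t => Real.exp (-t) * u⁻¹ by
          funext t; rw [div_eq_mul_inv]]
        rw [MeasureTheory.integral_mul_const, integral_exp_neg_Ioi, div_eq_mul_inv]

lemma gAux_nonneg {u : ℝ} (hu : 0 < u) : 0 ≤ gAux u := (gAux_pos hu).le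

lemma GAux_tendsto : Tendsto GAux atTop (nhds 0) := by
  have h1 : Tendsto (fun u : ℝ => Real.exp (-u)) atTop (nhds 0) := by
    exact tendsto_exp_neg_atTop_nhds_zero
  have h2 : Tendsto (fun u : ℝ => u * gAux u) atTop (nhds 0) := by
    apply tendsto_of_tendsto_of_tendsto_of_le_of_le' tendsto_const_nhds h1
    · filter_upwards [eventually_gt_atTop (0:ℝ)] with u hu
      exact mul_nonneg hu.le (gAux_nonneg hu)
    · filter_upwards [eventually_gt_atTop (0:ℝ)] with u hu
      calc u * gAux u ≤ u * (Real.exp (-u) / u) :=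
            mul_le_mul_of_nonneg_left (gAux_le hu) hu.le
        _ = Real.exp (-u) := by field_simp
  have h3 := h1.sub h2
  rw [sub_zero] at h3
  exact h3

/-- The outage probability `F(P_max) = e^{-Γ/(φP_max)} + (Γ/(φP_max)) Ei(-Γ/(φP_max))`
is strictly increasing in `P_max > 0` and tends to `0` as `P_max → 0⁺`. -/
theorem stmt11 (Γ φ : ℝ) (hΓ : 0 < Γ) (hφ : 0 < φ) :
    let F : ℝ → ℝ := fun P =>
      Real.exp (-Γ / (φ * P)) + Γ / (φ * P) * Ei (-(Γ / (φ * P)))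
    StrictMonoOn F (Set.Ioi 0) ∧ Tendsto F (nhdsWithin 0 (Set.Ioi 0)) (nhds 0) := by
  intro F
  have hF : ∀ P : ℝ, F P = GAux (Γ / (φ * P)) := by
    intro P
    simp only [F, GAux, Ei, gAux, neg_neg, neg_div]
    ring
  have hu_pos : ∀ P : ℝ, 0 < P → 0 < Γ / (φ * P) := fun P hP =>
    div_pos hΓ (mul_pos hφ hP)
  constructor
  · intro P1 h1 P2 h2 h12
    rw [Set.mem_Ioi] at h1 h2
    rw [hF, hF]
    apply GAux_strictAnti (hu_pos P2 h2)
    apply div_lt_div_of_pos_left hΓ (mul_pos hφ h1)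
    exact mul_lt_mul_of_pos_left h12 hφ
  · have hcomp : Tendsto (fun P : ℝ => Γ / (φ * P)) (nhdsWithin 0 (Set.Ioi 0)) atTop := by
      have h1 : Tendsto (fun P : ℝ => φ * P) (nhdsWithin 0 (Set.Ioi 0))
          (nhdsWithin 0 (Set.Ioi 0)) := by
        apply tendsto_nhdsWithin_of_tendsto_nhds_of_eventually_within
        · have h0 : Tendsto (fun P : ℝ => φ * P) (nhds 0) (nhds (φ * 0)) :=
            (continuous_const.mul continuous_id).tendsto 0
          rw [mul_zero] at h0
          exact h0.mono_left nhdsWithin_le_nhds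
        · filter_upwards [self_mem_nhdsWithin] with P hP
          exact mul_pos hφ hP
      have h2 : Tendsto (fun x : ℝ => Γ / x) (nhdsWithin 0 (Set.Ioi 0)) atTop := by
        simpa [div_eq_mul_inv] using tendsto_inv_nhdsGT_zero.const_mul_atTop hΓ
      exact h2.comp h1
    have := GAux_tendsto.comp hcomp
    refine this.congr fun P => ?_
    exact (hF P).symm
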